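/- If ψ : Γ → Γ' is an isomorphism of crystallographic groups and N is a normal subgroup of Γ, then the completion of ψ(N) in Γ' equals ψ(N̄), the image of the completion of N in Γ. -/

import Mathlib

noncomputable section

/-- Euclidean `n`-space. -/
abbrev E (n : ℕ) := EuclideanSpace ℝ (Fin n)

/-- An isometry `a + A` of `E n`, acting by `x ↦ a + A x`, with `A` a linear isometry
(an element of `O(n)`). -/
@[ext] structure Iso (n : ℕ) where
  a : E n
  A : E n ≃ₗᵢ[ℝ] E n

namespace Iso

variable {n : ℕ}

instance : Mul (Iso n) := ⟨fun x y => ⟨x.a + x.A y.a, y.A.trans x.A⟩⟩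
instance : One (Iso n) := ⟨⟨0, LinearIsometryEquiv.refl ℝ (E n)⟩⟩
instance : Inv (Iso n) := ⟨fun x => ⟨-(x.A.symm x.a), x.A.symm⟩⟩

@[simp] lemma mul_a (x y : Iso n) : (x * y).a = x.a + x.A y.a := rfl
@[simp] lemma mul_A (x y : Iso n) : (x * y).A = y.A.trans x.A := rfl
@[simp] lemma one_a : (1 : Iso n).a = 0 := rfl
@[simp] lemma one_A : (1 : Iso n).A = LinearIsometryEquiv.refl ℝ (E n) := rfl
@[simp] lemma inv_a (x : Iso n) : (x⁻¹).a = -(x.A.symm x.a) := rfl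
@[simp] lemma inv_A (x : Iso n) : (x⁻¹).A = x.A.symm := rfl

/-- The group of isometries of `E n`, with composition as multiplication. -/
instance : Group (Iso n) where
  mul_assoc x y z := by
    refine Iso.ext ?_ ?_
    · simp [add_assoc]
    · ext v; simp
  one_mul x := by refine Iso.ext ?_ ?_ <;> simp
  mul_one x := by refine Iso.ext ?_ ?_ <;> simp
  inv_mul_cancel x := by
    refine Iso.ext ?_ ?_
    · simp
    · ext v; simp

/-- The action of the isometry `a + A` on a point `x` of `E n`: `x ↦ a + A x`. -/
def act (g : Iso n) (x : E n) : E n := g.a + g.A x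

/-- The translation `a + I`. -/
def trans (a : E n) : Iso n := ⟨a, LinearIsometryEquiv.refl ℝ (E n)⟩

/-- `g` is a translation if its linear part is the identity. -/
def IsTranslation (g : Iso n) : Prop := g.A = LinearIsometryEquiv.refl ℝ (E n)

/-- The subgroup of all translations of `E n`. -/
def translations (n : ℕ) : Subgroup (Iso n) where
  carrier := {g | g.IsTranslation}
  mul_mem' := by
    intro x y hx hy
    simp only [Set.mem_setOf_eq, IsTranslation] at *
    rw [mul_A, hx, hy]; simp
  one_mem' := rfl
  inv_mem' := by
    intro x hx
    simp only [Set.mem_setOf_eq, IsTranslation] at *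
    rw [inv_A, hx]; rfl

/-- The set of translation vectors of a set `S` of isometries:
`{a : E n | a + I ∈ S}`. -/
def transVecs (S : Set (Iso n)) : Set (E n) := {a | Iso.trans a ∈ S}

/-- `Span(S)`: the real linear span of the translation vectors of `S`. -/
def spanS (S : Set (Iso n)) : Submodule ℝ (E n) :=
  Submodule.span ℝ (transVecs S)

/-- A crystallographic (space) group: a group of isometries of `E n` that acts
properly discontinuously (equivalently, is discrete) and cocompactly. -/
def IsCrystallographic (Γ : Subgroup (Iso n)) : Prop :=
  (∀ K : Set (E n), IsCompact K →
      {g : Iso n | g ∈ Γ ∧ ((Iso.act g '' K) ∩ K).Nonempty}.Finite) ∧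
  ∃ K : Set (E n), IsCompact K ∧ ∀ x : E n, ∃ g ∈ Γ, g.act x ∈ K

/-- `N` is a normal subgroup of `Γ`. -/
def IsNormalIn (N Γ : Subgroup (Iso n)) : Prop :=
  N ≤ Γ ∧ ∀ g ∈ Γ, ∀ x ∈ N, g * x * g⁻¹ ∈ N

/-- The completion of `S` in `Γ`:
`S̄ = {b+B ∈ Γ : b ∈ Span(S) and Span(S)ᗮ ⊆ Fix(B)}`. -/
def completion (Γ : Subgroup (Iso n)) (S : Set (Iso n)) : Set (Iso n) :=
  {g | g ∈ Γ ∧ g.a ∈ spanS S ∧ ∀ x ∈ (spanS S)ᗮ, g.A x = x}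

end Iso


namespace Aux
open Iso

variable {n : ℕ}

/-! ### Basic algebra of isometries -/

@[simp] lemma trans_a (v : E n) : (Iso.trans v).a = v := rfl
@[simp] lemma trans_A (v : E n) : (Iso.trans v).A = LinearIsometryEquiv.refl ℝ (E n) := rfl

lemma trans_injective : Function.Injective (Iso.trans (n := n)) := by
  intro a b h; simpa using congrArg Iso.a h

@[simp] lemma trans_mul_trans (v w : E n) :
    Iso.trans v * Iso.trans w = Iso.trans (v + w) := by
  refine Iso.ext ?_ ?_ <;> simp [Iso.trans]

@[simp] lemma trans_zero : Iso.trans (0 : E n) = 1 := by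
  refine Iso.ext ?_ ?_ <;> rfl

@[simp] lemma trans_inv (v : E n) : (Iso.trans v)⁻¹ = Iso.trans (-v) := by
  rw [eq_comm, eq_inv_iff_mul_eq_one, trans_mul_trans]
  simp

lemma conj_trans (g : Iso n) (v : E n) :
    g * Iso.trans v * g⁻¹ = Iso.trans (g.A v) := by
  refine Iso.ext ?_ ?_
  · simp [Iso.trans]
  · ext w
    simp [Iso.trans]

lemma pow_a (x : Iso n) (k : ℕ) : (x ^ (k+1)).a = x.a + x.A ((x ^ k).a) := by
  rw [pow_succ']; simp

lemma mem_transVecs {S : Set (Iso n)} {v : E n} : v ∈ transVecs S ↔ Iso.trans v ∈ S :=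
  Iff.rfl

/-- translation vectors of a subgroup, as an additive subgroup -/
def tv (Γ : Subgroup (Iso n)) : AddSubgroup (E n) where
  carrier := transVecs (Γ : Set (Iso n))
  add_mem' := by
    intro a b ha hb
    have := mul_mem (show Iso.trans a ∈ Γ from ha) (show Iso.trans b ∈ Γ from hb)
    rwa [trans_mul_trans] at this
  zero_mem' := by
    show Iso.trans 0 ∈ Γ
    rw [trans_zero]; exact one_mem Γ
  neg_mem' := by
    intro a ha
    have := inv_mem (show Iso.trans a ∈ Γ from ha)
    rwa [trans_inv] at this

lemma mem_tv {Γ : Subgroup (Iso n)} {v : E n} : v ∈ tv Γ ↔ Iso.trans v ∈ Γ := Iff.rfl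

/-! ### linear part as continuous linear map -/

/-- The linear part as a continuous linear map. -/
def cl (A : E n ≃ₗᵢ[ℝ] E n) : E n →L[ℝ] E n :=
  (A.toLinearEquiv.toLinearMap).toContinuousLinearMap

@[simp] lemma cl_apply (A : E n ≃ₗᵢ[ℝ] E n) (x : E n) : cl A x = A x := rfl

@[simp] lemma norm_cl_apply (A : E n ≃ₗᵢ[ℝ] E n) (x : E n) : ‖cl A x‖ = ‖x‖ := by
  simp [A.norm_map]

@[simp] lemma cl_refl : cl (LinearIsometryEquiv.refl ℝ (E n)) = 1 := by
  ext x; simp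

lemma cl_trans (A B : E n ≃ₗᵢ[ℝ] E n) : cl (A.trans B) = (cl B).comp (cl A) := by
  ext x; simp

lemma cl_symm_cl (A : E n ≃ₗᵢ[ℝ] E n) : (cl A.symm).comp (cl A) = 1 := by
  ext x; simp

lemma cl_cl_symm (A : E n ≃ₗᵢ[ℝ] E n) : (cl A).comp (cl A.symm) = 1 := by
  ext x; simp

lemma norm_comp_cl (f : E n →L[ℝ] E n) (A : E n ≃ₗᵢ[ℝ] E n) :
    ‖f.comp (cl A)‖ = ‖f‖ := by
  apply le_antisymm
  · refine ContinuousLinearMap.opNorm_le_bound _ (norm_nonneg f) (fun x => ?_)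
    calc ‖f (A x)‖ ≤ ‖f‖ * ‖A x‖ := f.le_opNorm _
    _ = ‖f‖ * ‖x‖ := by rw [A.norm_map]
  · have : f = (f.comp (cl A)).comp (cl A.symm) := by ext x; simp
    conv_lhs => rw [this]
    refine ContinuousLinearMap.opNorm_le_bound _ (norm_nonneg _) (fun x => ?_)
    calc ‖(f.comp (cl A)) (A.symm x)‖ ≤ ‖f.comp (cl A)‖ * ‖A.symm x‖ :=
      (f.comp (cl A)).le_opNorm _
    _ = ‖f.comp (cl A)‖ * ‖x‖ := by rw [A.symm.norm_map]

lemma norm_cl_comp (f : E n →L[ℝ] E n) (A : E n ≃ₗᵢ[ℝ] E n) :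
    ‖(cl A).comp f‖ = ‖f‖ := by
  apply le_antisymm
  · refine ContinuousLinearMap.opNorm_le_bound _ (norm_nonneg f) (fun x => ?_)
    calc ‖A (f x)‖ = ‖f x‖ := A.norm_map _
    _ ≤ ‖f‖ * ‖x‖ := f.le_opNorm _
  · have : f = (cl A.symm).comp ((cl A).comp f) := by ext x; simp
    conv_lhs => rw [this]
    refine ContinuousLinearMap.opNorm_le_bound _ (norm_nonneg _) (fun x => ?_)
    calc ‖A.symm (((cl A).comp f) x)‖ = ‖((cl A).comp f) x‖ := A.symm.norm_map _
    _ ≤ ‖(cl A).comp f‖ * ‖x‖ := ContinuousLinearMap.le_opNorm _ _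

/-- if the continuous linear parts agree, the isometries agree -/
lemma eq_of_cl_eq {A B : E n ≃ₗᵢ[ℝ] E n} (h : cl A = cl B) : A = B := by
  have : ∀ x, A x = B x := by
    intro x
    have := congrArg (fun f => f x) h
    simpa using this
  exact LinearIsometryEquiv.ext this

end Aux


namespace Aux
open Iso

variable {n : ℕ}

/-! ### discreteness and cocompactness -/

lemma finite_bounded {Γ : Subgroup (Iso n)} (hΓ : IsCrystallographic Γ) (R : ℝ) :
    {g : Iso n | g ∈ Γ ∧ ‖g.a‖ ≤ R}.Finite := by
  refine (hΓ.1 (Metric.closedBall 0 (max R 0)) (isCompact_closedBall _ _)).subset ?_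
  rintro g ⟨hg, hn⟩
  refine ⟨hg, ⟨g.a, ?_, ?_⟩⟩
  · refine ⟨0, ?_, ?_⟩
    · simp [Metric.mem_closedBall, le_max_right]
    · show g.act 0 = g.a
      simp [Iso.act]
  · rw [mem_closedBall_zero_iff]
    exact le_trans hn (le_max_left _ _)

lemma exists_R₀ {Γ : Subgroup (Iso n)} (hΓ : IsCrystallographic Γ) :
    ∃ R₀ : ℝ, 1 ≤ R₀ ∧ ∀ x : E n, ∃ g ∈ Γ, ‖g.a - x‖ ≤ R₀ := by
  obtain ⟨K, hK, hcov⟩ := hΓ.2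
  obtain ⟨r, hr⟩ := hK.isBounded.subset_closedBall 0
  refine ⟨max r 1, le_max_right _ _, fun x => ?_⟩
  obtain ⟨h, hmem, hx⟩ := hcov x
  refine ⟨h⁻¹, inv_mem hmem, ?_⟩
  have h1 : (h⁻¹).a - x = -(h.A.symm (h.a + h.A x)) := by
    simp [map_add]
    abel
  rw [h1, norm_neg, h.A.symm.norm_map]
  have := hr hx
  rw [mem_closedBall_zero_iff] at this
  exact le_trans this (le_max_left _ _)

/-! ### coarse density of a spanning additive subgroup -/

lemma density (L : AddSubgroup (E n)) :
    ∃ R₁ : ℝ, 1 ≤ R₁ ∧ ∀ x ∈ Submodule.span ℝ (L : Set (E n)), ∃ t ∈ L, ‖x - t‖ ≤ R₁ := by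
  classical
  -- find a finite subset of L spanning the same submodule
  have hmax : ∃ W ∈ {W : Submodule ℝ (E n) | ∃ T : Finset (E n), ↑T ⊆ (L : Set (E n)) ∧
      Submodule.span ℝ (↑T : Set (E n)) = W}, ∀ I ∈ {W : Submodule ℝ (E n) |
      ∃ T : Finset (E n), ↑T ⊆ (L : Set (E n)) ∧ Submodule.span ℝ (↑T : Set (E n)) = W},
      ¬ W < I := by
    refine (set_has_maximal_iff_noetherian.2 (inferInstance)) _ ⟨⊥, ∅, by simp⟩
  obtain ⟨W, ⟨T, hTL, hTW⟩, hWmax⟩ := hmax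
  have hWle : W ≤ Submodule.span ℝ (L : Set (E n)) := by
    rw [← hTW]; exact Submodule.span_mono hTL
  have hLW : (L : Set (E n)) ⊆ (W : Set (E n)) := by
    intro v hv
    by_contra hvW
    have hlt : W < Submodule.span ℝ (↑(insert v T) : Set (E n)) := by
      rw [lt_iff_le_and_ne]
      constructor
      · rw [← hTW]
        exact Submodule.span_mono (by simp [Finset.coe_insert, Set.subset_insert])
      · intro h
        apply hvW
        rw [h]
        exact Submodule.subset_span (by simp)
    exact hWmax _ ⟨insert v T, by
      rw [Finset.coe_insert]
      exact Set.insert_subset hv hTL, rfl⟩ hlt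
  have hspan : Submodule.span ℝ (L : Set (E n)) = Submodule.span ℝ (↑T : Set (E n)) := by
    rw [hTW]
    refine le_antisymm ?_ hWle
    rw [← Submodule.span_eq W]
    exact Submodule.span_mono hLW
  have hR1 : (1:ℝ) ≤ (∑ w ∈ T, ‖w‖) + 1 := by
    have : (0:ℝ) ≤ ∑ w ∈ T, ‖w‖ := Finset.sum_nonneg (fun w _ => norm_nonneg w)
    linarith
  refine ⟨(∑ w ∈ T, ‖w‖) + 1, hR1, fun x hx => ?_⟩
  rw [hspan, Submodule.mem_span_set] at hx
  obtain ⟨c, hsupp, hsum⟩ := hx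
  refine ⟨∑ w ∈ c.support, (⌊c w⌋ : ℤ) • w, ?_, ?_⟩
  · refine AddSubgroup.sum_mem L (fun w hw => AddSubgroup.zsmul_mem L ?_ _)
    exact hTL (hsupp hw)
  · have hx' : x = ∑ w ∈ c.support, c w • w := by
      rw [← hsum, Finsupp.sum]
    rw [hx']
    have : (∑ w ∈ c.support, c w • w) - (∑ w ∈ c.support, (⌊c w⌋ : ℤ) • w)
        = ∑ w ∈ c.support, (c w - ⌊c w⌋) • w := by
      rw [← Finset.sum_sub_distrib]
      congr 1
      ext w
      rw [← Int.cast_smul_eq_zsmul ℝ, ← sub_smul]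
    rw [this]
    have hsub : (∑ w ∈ c.support, ‖w‖) ≤ ∑ w ∈ T, ‖w‖ := by
      have hsupp' : c.support ⊆ T := by
        intro w hw
        exact_mod_cast hsupp hw
      exact Finset.sum_le_sum_of_subset_of_nonneg hsupp' (fun w _ _ => norm_nonneg w)
    refine le_trans (norm_sum_le _ _) (le_trans ?_ (by linarith))
    refine Finset.sum_le_sum (fun w hw => ?_)
    rw [norm_smul]
    have h1 : |c w - ⌊c w⌋| ≤ 1 := by
      rw [abs_le]
      constructor
      · linarith [Int.floor_le (c w)]
      · linarith [Int.lt_floor_add_one (c w)]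
    calc ‖c w - (⌊c w⌋:ℝ)‖ * ‖w‖ ≤ 1 * ‖w‖ := by
          apply mul_le_mul_of_nonneg_right _ (norm_nonneg w)
          rwa [Real.norm_eq_abs]
    _ = ‖w‖ := one_mul _

end Aux


namespace Aux
open Iso

variable {n : ℕ}

/-- Lemma T: existence of almost-translations with small rotation part,
arbitrarily large size, in a prescribed direction. -/
lemma lemmaT {Γ : Subgroup (Iso n)} {R₀ : ℝ} (hR₀ : 1 ≤ R₀)
    (hcov : ∀ x : E n, ∃ g ∈ Γ, ‖g.a - x‖ ≤ R₀)
    (v : E n) (hv : ‖v‖ = 1) {η T : ℝ} (hη : 0 < η) (hT : 0 < T) :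
    ∃ g ∈ Γ, ∃ s : ℝ, T ≤ s ∧ ‖cl g.A - 1‖ ≤ η ∧ ‖g.a - s • v‖ ≤ 2*R₀ + η*s := by
  have hsel : ∀ j : ℕ, ∃ g ∈ Γ, ‖g.a - (T * 2^j) • v‖ ≤ R₀ := fun j => hcov _
  choose β hβΓ hβ using hsel
  -- find two indices with close rotation parts
  have hball : ∀ j : ℕ, cl (β j).A ∈ Metric.closedBall (0 : E n →L[ℝ] E n) 1 := by
    intro j
    rw [Metric.mem_closedBall, dist_zero_right]
    refine ContinuousLinearMap.opNorm_le_bound _ zero_le_one (fun x => ?_)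
    rw [norm_cl_apply, one_mul]
  obtain ⟨ℓ, -, φ, hφ, hconv⟩ :=
    tendsto_subseq_of_bounded Metric.isBounded_closedBall hball
  rw [Metric.tendsto_atTop] at hconv
  obtain ⟨Nm, hNm⟩ := hconv (η/2) (by linarith)
  set i := φ (Nm+1) with hi
  set j := φ Nm with hj
  have hij : j + 1 ≤ i := hφ (Nat.lt_succ_self Nm)
  have hdist : ‖cl (β i).A - cl (β j).A‖ ≤ η := by
    have h1 := hNm (Nm+1) (Nat.le_succ Nm)
    have h2 := hNm Nm (le_refl Nm)
    have := dist_triangle (cl (β i).A) ℓ (cl (β j).A)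
    rw [dist_comm ℓ (cl (β j).A)] at this
    rw [← dist_eq_norm]
    calc dist (cl (β i).A) (cl (β j).A) ≤ _ + _ := this
    _ ≤ η := by
        simp only [Function.comp] at h1 h2
        rw [← hi] at h1
        rw [← hj] at h2
        linarith
  set ti := T * 2^i with hti
  set tj := T * 2^j with htj
  have htj1 : T ≤ tj := by
    rw [htj]
    nlinarith [one_le_pow₀ (show (1:ℝ) ≤ 2 by norm_num) (n := j)]
  have htij : 2 * tj ≤ ti := by
    rw [hti, htj]
    have : (2:ℝ)^(j+1) ≤ 2^i := pow_le_pow_right₀ (by norm_num) hij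
    rw [pow_succ] at this
    nlinarith
  set s := ti - tj with hs
  have hts : T ≤ s := by
    have : 0 < tj := lt_of_lt_of_le hT htj1
    rw [hs]; linarith
  have htjs : tj ≤ s := by rw [hs]; linarith
  refine ⟨β i * (β j)⁻¹, mul_mem (hβΓ i) (inv_mem (hβΓ j)), s, hts, ?_, ?_⟩
  · -- rotation part estimate
    have hA : cl ((β i * (β j)⁻¹).A) = (cl (β i).A).comp (cl ((β j).A.symm)) := by
      rw [mul_A, inv_A, cl_trans]
    rw [hA]
    have : (cl (β i).A).comp (cl ((β j).A.symm)) - 1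
        = (cl (β i).A - cl (β j).A).comp (cl ((β j).A.symm)) := by
      rw [ContinuousLinearMap.sub_comp]
      congr 1
      exact (cl_cl_symm (β j).A).symm
    rw [this, norm_comp_cl]
    exact hdist
  · -- translation part estimate
    have ha : (β i * (β j)⁻¹).a = (β i).a - (β i).A ((β j).A.symm ((β j).a)) := by
      simp [sub_eq_add_neg]
    rw [ha]
    have hsv : s • v = ti • v - tj • v := by rw [hs, sub_smul]
    set Bij : E n →L[ℝ] E n := (cl (β i).A).comp (cl ((β j).A.symm)) with hBij
    have key : (β i).a - (β i).A ((β j).A.symm ((β j).a)) - s • v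
        = ((β i).a - ti • v) - (Bij ((β j).a - tj • v)) - ((Bij - 1) (tj • v)) := by
      simp only [hBij, ContinuousLinearMap.sub_apply, ContinuousLinearMap.coe_comp',
        Function.comp_apply, cl_apply, ContinuousLinearMap.one_apply, map_sub]
      rw [hsv]
      abel
    rw [key]
    have hb1 : ‖(β i).a - ti • v‖ ≤ R₀ := hβ i
    have hb2 : ‖Bij ((β j).a - tj • v)‖ ≤ R₀ := by
      have : ‖Bij ((β j).a - tj • v)‖ = ‖(β j).a - tj • v‖ := by
        simp only [hBij, ContinuousLinearMap.coe_comp', Function.comp_apply, cl_apply]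
        rw [(β i).A.norm_map, (β j).A.symm.norm_map]
      rw [this]
      exact hβ j
    have hb3 : ‖(Bij - 1) (tj • v)‖ ≤ η * s := by
      have hB1 : ‖Bij - 1‖ ≤ η := by
        have : Bij - 1 = (cl (β i).A - cl (β j).A).comp (cl ((β j).A.symm)) := by
          rw [hBij, ContinuousLinearMap.sub_comp]
          congr 1
          exact (cl_cl_symm (β j).A).symm
        rw [this, norm_comp_cl]
        exact hdist
      calc ‖(Bij - 1) (tj • v)‖ ≤ ‖Bij - 1‖ * ‖tj • v‖ := ContinuousLinearMap.le_opNorm _ _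
      _ ≤ η * ‖tj • v‖ := by
          apply mul_le_mul_of_nonneg_right hB1 (norm_nonneg _)
      _ ≤ η * s := by
          rw [norm_smul, hv, mul_one, Real.norm_eq_abs, abs_of_pos (lt_of_lt_of_le hT htj1)]
          exact mul_le_mul_of_nonneg_left htjs (le_of_lt hη)
    calc ‖(β i).a - ti • v - Bij ((β j).a - tj • v) - (Bij - 1) (tj • v)‖
        ≤ ‖(β i).a - ti • v - Bij ((β j).a - tj • v)‖ + ‖(Bij - 1) (tj • v)‖ := norm_sub_le _ _
    _ ≤ (‖(β i).a - ti • v‖ + ‖Bij ((β j).a - tj • v)‖) + ‖(Bij - 1) (tj • v)‖ := by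
        have := norm_sub_le ((β i).a - ti • v) (Bij ((β j).a - tj • v))
        linarith
    _ ≤ 2*R₀ + η*s := by linarith

end Aux


namespace Aux
open Iso
open RealInnerProductSpace

variable {n : ℕ}

/-- estimate for the rotation part of a commutator -/
lemma comm_rot_est (α μ : Iso n) :
    ‖cl ((α*μ*α⁻¹*μ⁻¹).A) - 1‖ ≤ 2 * ‖cl α.A - 1‖ * ‖cl μ.A - 1‖ := by
  set P := cl α.A
  set Q := cl μ.A
  have hA : cl ((α*μ*α⁻¹*μ⁻¹).A)
      = (P.comp Q).comp ((cl α.A.symm).comp (cl μ.A.symm)) := by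
    refine ContinuousLinearMap.ext fun x => ?_
    simp [mul_A, inv_A, P, Q]
  have key : cl ((α*μ*α⁻¹*μ⁻¹).A) - 1
      = (P.comp Q - Q.comp P).comp ((cl α.A.symm).comp (cl μ.A.symm)) := by
    rw [hA, ContinuousLinearMap.sub_comp]
    congr 1
    refine ContinuousLinearMap.ext fun x => ?_
    simp [P, Q]
  rw [key]
  have h1 : ‖(P.comp Q - Q.comp P).comp ((cl α.A.symm).comp (cl μ.A.symm))‖
      = ‖P.comp Q - Q.comp P‖ := by
    rw [← ContinuousLinearMap.comp_assoc, norm_comp_cl, norm_comp_cl]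
  rw [h1]
  have h2 : P.comp Q - Q.comp P = (P-1).comp (Q-1) - (Q-1).comp (P-1) := by
    refine ContinuousLinearMap.ext fun x => ?_
    simp only [ContinuousLinearMap.sub_apply, ContinuousLinearMap.coe_comp',
      Function.comp_apply, ContinuousLinearMap.one_apply, map_sub]
    abel
  rw [h2]

  calc ‖(P-1).comp (Q-1) - (Q-1).comp (P-1)‖
      ≤ ‖(P-1).comp (Q-1)‖ + ‖(Q-1).comp (P-1)‖ := norm_sub_le _ _
  _ ≤ ‖P-1‖*‖Q-1‖ + ‖Q-1‖*‖P-1‖ := by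
      have := ContinuousLinearMap.opNorm_comp_le (P-1) (Q-1)
      have := ContinuousLinearMap.opNorm_comp_le (Q-1) (P-1)
      gcongr <;> first | exact ContinuousLinearMap.opNorm_comp_le _ _
  _ = 2 * ‖P-1‖ * ‖Q-1‖ := by ring

/-- estimate for the translation part of a commutator -/
lemma comm_a_est (α μ : Iso n) :
    ‖(α*μ*α⁻¹*μ⁻¹).a - (cl α.A - 1) μ.a‖
      ≤ ‖cl μ.A - 1‖ * ‖α.a‖ + 2 * ‖cl α.A - 1‖ * ‖cl μ.A - 1‖ * ‖μ.a‖ := by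
  have ha : (α*μ*α⁻¹*μ⁻¹).a
      = α.a + α.A μ.a - α.A (μ.A (α.A.symm α.a)) - α.A (μ.A (α.A.symm (μ.A.symm μ.a))) := by
    simp only [mul_a, mul_A, inv_a, inv_A, LinearIsometryEquiv.trans_apply, map_neg, map_add]
    abel
  have hsplit : (α*μ*α⁻¹*μ⁻¹).a - (cl α.A - 1) μ.a
      = (α.a - α.A (μ.A (α.A.symm α.a))) - ((cl ((α*μ*α⁻¹*μ⁻¹).A) - 1) μ.a) := by
    rw [ha]
    have hAc : cl ((α*μ*α⁻¹*μ⁻¹).A) μ.a = α.A (μ.A (α.A.symm (μ.A.symm μ.a))) := by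
      simp [mul_A, inv_A]
    simp only [ContinuousLinearMap.sub_apply, ContinuousLinearMap.one_apply, cl_apply, hAc]
    abel
  rw [hsplit]
  have h1 : ‖α.a - α.A (μ.A (α.A.symm α.a))‖ ≤ ‖cl μ.A - 1‖ * ‖α.a‖ := by
    have he : α.a - α.A (μ.A (α.A.symm α.a)) = -(α.A ((cl μ.A - 1) (α.A.symm α.a))) := by
      simp only [ContinuousLinearMap.sub_apply, ContinuousLinearMap.one_apply, cl_apply, map_sub]
      simp
    rw [he, norm_neg, α.A.norm_map]
    calc ‖(cl μ.A - 1) (α.A.symm α.a)‖ ≤ ‖cl μ.A - 1‖ * ‖α.A.symm α.a‖ :=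
      ContinuousLinearMap.le_opNorm _ _
    _ = ‖cl μ.A - 1‖ * ‖α.a‖ := by rw [α.A.symm.norm_map]
  have h2 : ‖(cl ((α*μ*α⁻¹*μ⁻¹).A) - 1) μ.a‖ ≤ 2 * ‖cl α.A - 1‖ * ‖cl μ.A - 1‖ * ‖μ.a‖ := by
    calc ‖(cl ((α*μ*α⁻¹*μ⁻¹).A) - 1) μ.a‖ ≤ ‖cl ((α*μ*α⁻¹*μ⁻¹).A) - 1‖ * ‖μ.a‖ :=
      ContinuousLinearMap.le_opNorm _ _
    _ ≤ 2 * ‖cl α.A - 1‖ * ‖cl μ.A - 1‖ * ‖μ.a‖ := by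
        apply mul_le_mul_of_nonneg_right (comm_rot_est α μ) (norm_nonneg _)
  calc ‖(α.a - α.A (μ.A (α.A.symm α.a))) - ((cl ((α*μ*α⁻¹*μ⁻¹).A) - 1) μ.a)‖
      ≤ ‖α.a - α.A (μ.A (α.A.symm α.a))‖ + ‖(cl ((α*μ*α⁻¹*μ⁻¹).A) - 1) μ.a‖ := norm_sub_le _ _
  _ ≤ _ := by linarith

/-- the image of `cl A - 1` is orthogonal to its kernel -/
lemma clA_sub_one_mem_orth (A : E n ≃ₗᵢ[ℝ] E n) (m : E n) :
    (cl A - 1) m ∈ (LinearMap.ker ((cl A - 1 : E n →L[ℝ] E n) : E n →ₗ[ℝ] E n))ᗮ := by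
  rw [Submodule.mem_orthogonal]
  intro y hy
  have hAy : A y = y := by
    have h0 : (cl A - 1) y = 0 := hy
    simp only [ContinuousLinearMap.sub_apply, ContinuousLinearMap.one_apply, cl_apply] at h0
    rwa [sub_eq_zero] at h0
  have : ⟪y, (cl A - 1) m⟫ = ⟪y, A m⟫ - ⟪y, m⟫ := by
    simp only [ContinuousLinearMap.sub_apply, ContinuousLinearMap.one_apply, cl_apply]
    rw [inner_sub_right]
  rw [this]
  have : ⟪y, A m⟫ = ⟪A y, A m⟫ := by rw [hAy]
  rw [this, A.inner_map_map]
  ring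

/-- the lower bound constant on the orthogonal complement of the kernel -/
lemma exists_c₀ (A : E n ≃ₗᵢ[ℝ] E n) :
    ∃ c₀ : ℝ, 0 < c₀ ∧ c₀ ≤ 1 ∧ ∀ x ∈ (LinearMap.ker ((cl A - 1 : E n →L[ℝ] E n) : E n →ₗ[ℝ] E n))ᗮ,
      c₀ * ‖x‖ ≤ ‖(cl A - 1) x‖ := by
  classical
  set K := LinearMap.ker ((cl A - 1 : E n →L[ℝ] E n) : E n →ₗ[ℝ] E n)
  set U' := Kᗮ
  have hmaps : ∀ x ∈ U', ((cl A - 1 : E n →L[ℝ] E n) : E n →ₗ[ℝ] E n) x ∈ U' :=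
    fun x _ => clA_sub_one_mem_orth A x
  set Tres : U' →ₗ[ℝ] U' :=
    LinearMap.restrict ((cl A - 1 : E n →L[ℝ] E n) : E n →ₗ[ℝ] E n) hmaps
  have hinj : Function.Injective Tres := by
    intro x y hxy
    have h0 : Tres (x - y) = 0 := by rw [map_sub, hxy, sub_self]
    have hker : ((x : E n) - y) ∈ K := by
      have : ((cl A - 1 : E n →L[ℝ] E n)) ((x:E n) - (y:E n)) = 0 := by
        have := congrArg (Subtype.val) h0
        simpa [Tres, LinearMap.restrict_apply] using this
      exact this
    have horth : ((x : E n) - y) ∈ Kᗮ := sub_mem x.2 y.2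
    have hz : ((x : E n) - y) = 0 := by
      have := (Submodule.mem_orthogonal _ _).1 horth _ hker
      rwa [inner_self_eq_zero] at this
    rw [sub_eq_zero] at hz
    exact Subtype.ext hz
  set e := LinearEquiv.ofInjectiveEndo Tres hinj
  set g := (e.symm : U' →ₗ[ℝ] U').toContinuousLinearMap
  set C := ‖g‖
  refine ⟨min (C+1)⁻¹ 1, ?_, min_le_right _ _, ?_⟩
  · apply lt_min _ one_pos
    positivity
  · intro x hx
    set x' : U' := ⟨x, hx⟩
    have h1 : ‖x‖ ≤ (C+1) * ‖(cl A - 1) x‖ := by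
      have hxe : x' = e.symm (e x') := by rw [LinearEquiv.symm_apply_apply]
      have h2 : ‖x'‖ ≤ C * ‖e x'‖ := by
        conv_lhs => rw [hxe]
        exact g.le_opNorm _
      have h3 : ‖e x'‖ = ‖(cl A - 1) x‖ := by
        show ‖(Tres x' : E n)‖ = _
        rw [LinearMap.restrict_apply]
        rfl
      have h4 : ‖x'‖ = ‖x‖ := rfl
      rw [h4, h3] at h2
      nlinarith [norm_nonneg ((cl A - 1) x)]
    have hC : (0:ℝ) < C + 1 := by positivity
    calc min (C+1)⁻¹ 1 * ‖x‖ ≤ (C+1)⁻¹ * ‖x‖ :=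
          mul_le_mul_of_nonneg_right (min_le_left _ _) (norm_nonneg x)
    _ ≤ ‖(cl A - 1) x‖ := by
        rw [inv_mul_le_iff₀ hC]
        linarith

end Aux


namespace Aux
open Iso

variable {n : ℕ}
set_option maxHeartbeats 1000000

/-- single step of the contraction process -/
lemma gap_step (α μ : Iso n) {c₀ η₀ P : ℝ}
    (hc₀pos : 0 < c₀) (hc₀le : c₀ ≤ 1)
    (hc₀' : ∀ m : E n, c₀ * ‖(cl α.A - 1) m‖ ≤ ‖(cl α.A - 1) ((cl α.A - 1) m)‖)
    (hε : ‖cl α.A - 1‖ < 1/2)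
    (hη : 100 * η₀ ≤ c₀^2) (hη0 : 0 < η₀)
    (hP : ‖α.a‖ ≤ P) (hP0 : 0 < P)
    (hr : ‖cl μ.A - 1‖ ≤ η₀)
    (hm : c₀ * ‖μ.a‖ ≤ 4 * ‖(cl α.A - 1) μ.a‖)
    (hd : P < ‖(cl α.A - 1) μ.a‖) :
    ‖cl (α*μ*α⁻¹*μ⁻¹).A - 1‖ ≤ η₀ ∧
    c₀ * ‖(α*μ*α⁻¹*μ⁻¹).a‖ ≤ 4 * ‖(cl α.A - 1) (α*μ*α⁻¹*μ⁻¹).a‖ ∧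
    c₀/2 * ‖(cl α.A - 1) μ.a‖ ≤ ‖(cl α.A - 1) (α*μ*α⁻¹*μ⁻¹).a‖ ∧
    ‖(cl α.A - 1) (α*μ*α⁻¹*μ⁻¹).a‖ ≤ 3/4 * ‖(cl α.A - 1) μ.a‖ := by
  have hEa := comm_a_est α μ
  have hEr := comm_rot_est α μ
  set D : E n →L[ℝ] E n := cl α.A - 1 with hD
  set ε : ℝ := ‖D‖ with hεd
  set dk : ℝ := ‖D μ.a‖ with hdk
  set rk : ℝ := ‖cl μ.A - 1‖ with hrk
  set mk : ℝ := ‖μ.a‖ with hmk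
  set Ek : ℝ := ‖(α*μ*α⁻¹*μ⁻¹).a - D μ.a‖ with hEkd
  have hεnn : 0 ≤ ε := norm_nonneg _
  have hrnn : 0 ≤ rk := norm_nonneg _
  have hmnn : 0 ≤ mk := norm_nonneg _
  have hdnn : 0 ≤ dk := norm_nonneg _
  have hEknn : 0 ≤ Ek := norm_nonneg _
  have hEk : Ek ≤ rk * ‖α.a‖ + 2 * ε * rk * mk := hEa
  -- Ek is small
  have hEksmall : 20 * Ek ≤ c₀ * dk := by
    have h1 : Ek ≤ η₀ * dk + η₀ * mk := by
      have ha1 : rk * ‖α.a‖ ≤ η₀ * dk :=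
        mul_le_mul hr (by linarith) (norm_nonneg _) (le_of_lt hη0)
      have ha2 : 2 * ε * rk * mk ≤ η₀ * mk := by
        have h2ε : 2 * ε ≤ 1 := by linarith
        have h2b := mul_le_mul_of_nonneg_right h2ε hrnn
        have : 2 * ε * rk ≤ η₀ := by linarith
        exact mul_le_mul_of_nonneg_right this hmnn
      linarith
    have e1 : c₀ * Ek ≤ c₀ * (η₀ * dk + η₀ * mk) :=
      mul_le_mul_of_nonneg_left h1 (le_of_lt hc₀pos)
    have e2 : η₀ * (c₀ * mk) ≤ η₀ * (4 * dk) :=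
      mul_le_mul_of_nonneg_left hm (le_of_lt hη0)
    have e3 : c₀ * (η₀ * dk) ≤ 1 * (η₀ * dk) :=
      mul_le_mul_of_nonneg_right hc₀le (mul_nonneg (le_of_lt hη0) hdnn)
    have e5 : (100 * η₀) * dk ≤ c₀^2 * dk := mul_le_mul_of_nonneg_right hη hdnn
    have e6 : c₀ * (20 * Ek) ≤ c₀ * (c₀ * dk) := by nlinarith [e1, e2, e3, e5]
    exact le_of_mul_le_mul_left e6 hc₀pos
  -- lower bound for the new d
  have hlow : c₀ * dk - Ek ≤ ‖D (α*μ*α⁻¹*μ⁻¹).a‖ := by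
    have h1 : c₀ * dk ≤ ‖D (D μ.a)‖ := hc₀' _
    have h2 : ‖D ((α*μ*α⁻¹*μ⁻¹).a) - D (D μ.a)‖ ≤ Ek := by
      rw [← map_sub]
      calc ‖D ((α*μ*α⁻¹*μ⁻¹).a - D μ.a)‖ ≤ ε * Ek := D.le_opNorm _
      _ ≤ 1 * Ek := mul_le_mul_of_nonneg_right (by linarith) hEknn
      _ = Ek := one_mul _
    have h3 := norm_sub_norm_le (D (D μ.a)) (D ((α*μ*α⁻¹*μ⁻¹).a))
    rw [norm_sub_rev] at h3
    linarith
  have hlow2 : c₀/2 * dk ≤ ‖D (α*μ*α⁻¹*μ⁻¹).a‖ := by linarith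
  -- upper bound for the new m
  have hmup : ‖(α*μ*α⁻¹*μ⁻¹).a‖ ≤ dk + Ek := by
    have h1 := norm_add_le (D μ.a) ((α*μ*α⁻¹*μ⁻¹).a - D μ.a)
    simp only [add_sub_cancel] at h1
    linarith
  -- upper bound for the new d
  have hup : ‖D (α*μ*α⁻¹*μ⁻¹).a‖ ≤ 3/4 * dk := by
    have h1 : ‖D (α*μ*α⁻¹*μ⁻¹).a‖ ≤ ε * ‖(α*μ*α⁻¹*μ⁻¹).a‖ := D.le_opNorm _
    have h2 : ε * ‖(α*μ*α⁻¹*μ⁻¹).a‖ ≤ ε * (dk + Ek) :=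
      mul_le_mul_of_nonneg_left hmup hεnn
    have h3 : ε * (dk + Ek) ≤ 1/2 * (dk + Ek) :=
      mul_le_mul_of_nonneg_right (le_of_lt hε) (by linarith)
    have h4 : c₀ * dk ≤ 1 * dk := mul_le_mul_of_nonneg_right hc₀le hdnn
    linarith
  -- new invariant for m
  have hminv : c₀ * ‖(α*μ*α⁻¹*μ⁻¹).a‖ ≤ 4 * ‖D (α*μ*α⁻¹*μ⁻¹).a‖ := by
    have h1 : c₀ * ‖(α*μ*α⁻¹*μ⁻¹).a‖ ≤ c₀ * (dk + Ek) :=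
      mul_le_mul_of_nonneg_left hmup (le_of_lt hc₀pos)
    have h2 : c₀ * Ek ≤ 1 * Ek := mul_le_mul_of_nonneg_right hc₀le hEknn
    linarith
  -- new rotation bound
  have hrup : ‖cl (α*μ*α⁻¹*μ⁻¹).A - 1‖ ≤ η₀ := by
    have h1 : ‖cl (α*μ*α⁻¹*μ⁻¹).A - 1‖ ≤ 2 * ε * rk := hEr
    have h2 : 2 * ε * rk ≤ 1 * rk :=
      mul_le_mul_of_nonneg_right (by linarith) hrnn
    linarith
  exact ⟨hrup, hminv, hlow2, hup⟩

/-- commutator of an isometry with a translation -/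
lemma comm_with_trans (α : Iso n) (z : E n) :
    α * Iso.trans z * α⁻¹ * (Iso.trans z)⁻¹ = Iso.trans ((cl α.A - 1) z) := by
  rw [conj_trans, trans_inv, trans_mul_trans]
  congr 1

/-- one run of the contraction process -/
lemma gap_run {Γ : Subgroup (Iso n)} {R₀ : ℝ} (hR₀ : 1 ≤ R₀)
    (hcov : ∀ x : E n, ∃ g ∈ Γ, ‖g.a - x‖ ≤ R₀) {α : Iso n} (hα : α ∈ Γ)
    (hsmall : ‖cl α.A - 1‖ < 1/2)
    {c₀ : ℝ} (hc₀pos : 0 < c₀) (hc₀le : c₀ ≤ 1)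
    (hc₀ : ∀ x ∈ (LinearMap.ker ((cl α.A - 1 : E n →L[ℝ] E n) : E n →ₗ[ℝ] E n))ᗮ,
      c₀ * ‖x‖ ≤ ‖(cl α.A - 1) x‖)
    {u : E n} (hu1 : ‖u‖ = 1)
    (huU : u ∈ (LinearMap.ker ((cl α.A - 1 : E n →L[ℝ] E n) : E n →ₗ[ℝ] E n))ᗮ)
    (jj : ℕ) :
    ∃ ξ : Iso n, ξ ∈ Γ ∧ c₀ * ‖ξ.a‖ ≤ 4 * (‖α.a‖ + R₀ + 1) ∧
      ‖cl ξ.A - 1‖ ≤ 1/(jj+1) ∧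
      c₀/2 * (‖α.a‖ + R₀ + 1) ≤ ‖(cl α.A - 1) ξ.a‖ := by
  have hc₀' : ∀ m : E n, c₀ * ‖(cl α.A - 1) m‖ ≤ ‖(cl α.A - 1) ((cl α.A - 1) m)‖ :=
    fun m => hc₀ _ (clA_sub_one_mem_orth α.A m)
  have hεnn : (0:ℝ) ≤ ‖cl α.A - 1‖ := norm_nonneg _
  have hDu : c₀ ≤ ‖(cl α.A - 1) u‖ := by
    have := hc₀ u huU
    rwa [hu1, mul_one] at this
  set P : ℝ := ‖α.a‖ + R₀ + 1 with hPdef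
  have hP1 : 1 ≤ P := by
    have := norm_nonneg α.a
    rw [hPdef]; linarith
  have hP0 : 0 < P := by linarith
  have hPa : ‖α.a‖ ≤ P := by rw [hPdef]; linarith
  set η₀ : ℝ := min (min (c₀^2/100) (c₀/4)) (1/(jj+1)) with hη₀def
  have hjj : (0:ℝ) < 1/(jj+1) := by positivity
  have hη₀pos : 0 < η₀ := lt_min (lt_min (by positivity) (by positivity)) hjj
  have hη₀a : 100 * η₀ ≤ c₀^2 := by
    have h := le_trans (min_le_left (min (c₀^2/100) (c₀/4)) (1/(jj+1)))
      (min_le_left (c₀^2/100) (c₀/4))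
    rw [hη₀def]; linarith
  have hη₀b : 4 * η₀ ≤ c₀ := by
    have h := le_trans (min_le_left (min (c₀^2/100) (c₀/4)) (1/(jj+1)))
      (min_le_right (c₀^2/100) (c₀/4))
    rw [hη₀def]; linarith
  have hη₀c : η₀ ≤ 1/(jj+1) := min_le_right _ _
  set T : ℝ := (8*R₀ + 2*P + 2)/c₀ + 1 with hTdef
  have hTpos : 0 < T := by
    rw [hTdef]
    have h0 : 0 ≤ (8*R₀ + 2*P + 2)/c₀ := by positivity
    linarith
  have hcT : 8*R₀ + 2*P + 2 + c₀ ≤ c₀ * T := by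
    have h0 : c₀ * T = 8*R₀ + 2*P + 2 + c₀ := by
      rw [hTdef]
      field_simp
    rw [h0]
  obtain ⟨γ, hγΓ, s, hsT, hγrot, hγtr⟩ := lemmaT hR₀ hcov u hu1 hη₀pos hTpos
  have hspos : 0 < s := lt_of_lt_of_le hTpos hsT
  have hcs : 8*R₀ + 2*P + 2 + c₀ ≤ c₀ * s :=
    le_trans hcT (mul_le_mul_of_nonneg_left hsT (le_of_lt hc₀pos))
  have hγrot' : ‖cl γ.A - 1‖ ≤ η₀ := hγrot
  -- the sequence of iterated commutators
  set f : Iso n → Iso n := fun m => α*m*α⁻¹*m⁻¹ with hfdef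
  set μ : ℕ → Iso n := fun k => f^[k] γ with hμdef
  have hμ0 : μ 0 = γ := rfl
  have hμs : ∀ k, μ (k+1) = α * (μ k) * α⁻¹ * (μ k)⁻¹ := by
    intro k
    simp only [hμdef, hfdef, Function.iterate_succ_apply']
  -- invariant and step
  have step : ∀ k, (μ k ∈ Γ ∧ ‖cl (μ k).A - 1‖ ≤ η₀ ∧
        c₀ * ‖(μ k).a‖ ≤ 4 * ‖(cl α.A - 1) (μ k).a‖) →
      P < ‖(cl α.A - 1) (μ k).a‖ →
      (μ (k+1) ∈ Γ ∧ ‖cl (μ (k+1)).A - 1‖ ≤ η₀ ∧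
        c₀ * ‖(μ (k+1)).a‖ ≤ 4 * ‖(cl α.A - 1) (μ (k+1)).a‖) ∧
      c₀/2 * ‖(cl α.A - 1) (μ k).a‖ ≤ ‖(cl α.A - 1) (μ (k+1)).a‖ ∧
      ‖(cl α.A - 1) (μ (k+1)).a‖ ≤ 3/4 * ‖(cl α.A - 1) (μ k).a‖ := by
    rintro k ⟨h1, h2, h3⟩ h4
    have hst := gap_step α (μ k) hc₀pos hc₀le hc₀' hsmall hη₀a hη₀pos hPa hP0 h2 h3 h4
    rw [← hμs k] at hst
    have hmem : μ (k+1) ∈ Γ := by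
      rw [hμs k]
      exact mul_mem (mul_mem (mul_mem hα h1) (inv_mem hα)) (inv_mem h1)
    exact ⟨⟨hmem, hst.1, hst.2.1⟩, hst.2.2.1, hst.2.2.2⟩
  -- initial estimates
  have hd0' : P < ‖(cl α.A - 1) γ.a‖ ∧ c₀/2 * s ≤ ‖(cl α.A - 1) γ.a‖ := by
    have h1 : ‖(cl α.A - 1) (s • u)‖ = s * ‖(cl α.A - 1) u‖ := by
      rw [map_smul, norm_smul, Real.norm_eq_abs, abs_of_pos hspos]
    have h2 : s * c₀ ≤ ‖(cl α.A - 1) (s • u)‖ := by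
      rw [h1]
      exact mul_le_mul_of_nonneg_left hDu (le_of_lt hspos)
    have h3 : ‖(cl α.A - 1) γ.a - (cl α.A - 1) (s • u)‖ ≤ 2*R₀ + η₀*s := by
      rw [← map_sub]
      calc ‖(cl α.A - 1) (γ.a - s • u)‖ ≤ ‖cl α.A - 1‖ * ‖γ.a - s • u‖ :=
        ContinuousLinearMap.le_opNorm _ _
      _ ≤ 1 * (2*R₀ + η₀*s) := by
          apply mul_le_mul (by linarith) hγtr (norm_nonneg _) (by norm_num)
      _ = 2*R₀ + η₀*s := one_mul _
    have h4 := norm_sub_norm_le ((cl α.A - 1) (s • u)) ((cl α.A - 1) γ.a)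
    rw [norm_sub_rev] at h4
    have h5 : s * c₀ - (2*R₀ + η₀*s) ≤ ‖(cl α.A - 1) γ.a‖ := by linarith
    have h6 : η₀ * s ≤ c₀/4 * s :=
      mul_le_mul_of_nonneg_right (by linarith) (le_of_lt hspos)
    constructor
    · nlinarith
    · nlinarith
  have hInv0 : μ 0 ∈ Γ ∧ ‖cl (μ 0).A - 1‖ ≤ η₀ ∧
      c₀ * ‖(μ 0).a‖ ≤ 4 * ‖(cl α.A - 1) (μ 0).a‖ := by
    rw [hμ0]
    refine ⟨hγΓ, hγrot', ?_⟩
    have hm0 : ‖γ.a‖ ≤ s + (2*R₀ + η₀*s) := by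
      have h := norm_add_le (s • u) (γ.a - s • u)
      simp only [add_sub_cancel] at h
      have hsu : ‖s • u‖ = s := by
        rw [norm_smul, hu1, mul_one, Real.norm_eq_abs, abs_of_pos hspos]
      rw [hsu] at h
      linarith [hγtr]
    have e1 : c₀ * ‖γ.a‖ ≤ c₀ * (s + (2*R₀ + η₀*s)) :=
      mul_le_mul_of_nonneg_left hm0 (le_of_lt hc₀pos)
    have e2 : c₀ * (η₀ * s) ≤ 1 * (η₀ * s) :=
      mul_le_mul_of_nonneg_right hc₀le (mul_nonneg (le_of_lt hη₀pos) (le_of_lt hspos))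
    have e3 : η₀ * s ≤ c₀/4 * s :=
      mul_le_mul_of_nonneg_right (by linarith) (le_of_lt hspos)
    have e4 : c₀ * R₀ ≤ 1 * R₀ :=
      mul_le_mul_of_nonneg_right hc₀le (by linarith)
    nlinarith [hd0'.2]
  rw [← hμ0] at hd0'
  -- stopping time
  have hstop : ∃ k, ‖(cl α.A - 1) (μ k).a‖ ≤ P := by
    by_contra hno
    push_neg at hno
    have hall : ∀ k, μ k ∈ Γ ∧ ‖cl (μ k).A - 1‖ ≤ η₀ ∧
        c₀ * ‖(μ k).a‖ ≤ 4 * ‖(cl α.A - 1) (μ k).a‖ := by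
      intro k
      induction k with
      | zero => exact hInv0
      | succ k ih => exact (step k ih (hno k)).1
    have hdecay : ∀ k, ‖(cl α.A - 1) (μ k).a‖ ≤ (3/4)^k * ‖(cl α.A - 1) (μ 0).a‖ := by
      intro k
      induction k with
      | zero => simp
      | succ k ih =>
          calc ‖(cl α.A - 1) (μ (k+1)).a‖ ≤ 3/4 * ‖(cl α.A - 1) (μ k).a‖ :=
            (step k (hall k) (hno k)).2.2
          _ ≤ 3/4 * ((3/4)^k * ‖(cl α.A - 1) (μ 0).a‖) := by linarith
          _ = (3/4)^(k+1) * ‖(cl α.A - 1) (μ 0).a‖ := by ring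
    have hd0pos : 0 < ‖(cl α.A - 1) (μ 0).a‖ := lt_trans hP0 hd0'.1
    obtain ⟨k, hk⟩ := exists_pow_lt_of_lt_one (div_pos hP0 hd0pos)
      (by norm_num : (3:ℝ)/4 < 1)
    have hcon : ‖(cl α.A - 1) (μ k).a‖ < P := by
      calc ‖(cl α.A - 1) (μ k).a‖ ≤ (3/4)^k * ‖(cl α.A - 1) (μ 0).a‖ := hdecay k
      _ < (P / ‖(cl α.A - 1) (μ 0).a‖) * ‖(cl α.A - 1) (μ 0).a‖ :=
          mul_lt_mul_of_pos_right hk hd0pos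
      _ = P := div_mul_cancel₀ _ (ne_of_gt hd0pos)
    exact absurd hcon (not_lt.2 (le_of_lt (hno k)))
  set K := Nat.find hstop with hKdef
  have hKle : ‖(cl α.A - 1) (μ K).a‖ ≤ P := Nat.find_spec hstop
  have hKlt : ∀ k < K, P < ‖(cl α.A - 1) (μ k).a‖ :=
    fun k hk => lt_of_not_ge (Nat.find_min hstop hk)
  have hInvK : ∀ k, k ≤ K → (μ k ∈ Γ ∧ ‖cl (μ k).A - 1‖ ≤ η₀ ∧
      c₀ * ‖(μ k).a‖ ≤ 4 * ‖(cl α.A - 1) (μ k).a‖) := by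
    intro k
    induction k with
    | zero => exact fun _ => hInv0
    | succ k ih =>
        intro hk
        exact (step k (ih (le_trans (Nat.le_succ k) hk))
          (hKlt k (lt_of_lt_of_le (Nat.lt_succ_self k) hk))).1
  have hKpos : 0 < K := by
    rcases Nat.eq_zero_or_pos K with h | h
    · exfalso
      have h2 := hKle
      rw [h] at h2
      exact absurd h2 (not_le.2 hd0'.1)
    · exact h
  obtain ⟨K', hKK⟩ : ∃ K', K = K' + 1 := ⟨K - 1, (Nat.succ_pred_eq_of_pos hKpos).symm⟩
  have hfin := step K' (hInvK K' (by omega)) (hKlt K' (by omega))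
  refine ⟨μ K, (hInvK K le_rfl).1, ?_, ?_, ?_⟩
  · have h1 := (hInvK K le_rfl).2.2
    linarith
  · exact le_trans (hInvK K le_rfl).2.1 hη₀c
  · have h1 : c₀/2 * ‖(cl α.A - 1) (μ K').a‖ ≤ ‖(cl α.A - 1) (μ (K'+1)).a‖ := hfin.2.1
    have h2 : P < ‖(cl α.A - 1) (μ K').a‖ := hKlt K' (by omega)
    rw [hKK]
    nlinarith

/-- The gap lemma: in a crystallographic group, an element whose rotation part is
within 1/2 of the identity in operator norm is a pure translation. -/
lemma gap {Γ : Subgroup (Iso n)} (hΓ : IsCrystallographic Γ) {R₀ : ℝ} (hR₀ : 1 ≤ R₀)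
    (hcov : ∀ x : E n, ∃ g ∈ Γ, ‖g.a - x‖ ≤ R₀) {α : Iso n} (hα : α ∈ Γ)
    (hsmall : ‖cl α.A - 1‖ < 1/2) : α.A = LinearIsometryEquiv.refl ℝ (E n) := by
  by_contra hAne
  have hDne : (cl α.A - 1 : E n →L[ℝ] E n) ≠ 0 := by
    intro h
    apply hAne
    apply eq_of_cl_eq
    rw [cl_refl]
    linear_combination (norm := abel) h
  obtain ⟨c₀, hc₀pos, hc₀le, hc₀⟩ := exists_c₀ α.A
  obtain ⟨z, hz⟩ : ∃ z : E n, (cl α.A - 1) z ≠ 0 := by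
    by_contra h
    push_neg at h
    exact hDne (ContinuousLinearMap.ext h)
  set u : E n := ‖(cl α.A - 1) z‖⁻¹ • ((cl α.A - 1) z) with hudef
  have hu1 : ‖u‖ = 1 := norm_smul_inv_norm hz
  have huU : u ∈ (LinearMap.ker ((cl α.A - 1 : E n →L[ℝ] E n) : E n →ₗ[ℝ] E n))ᗮ :=
    Submodule.smul_mem _ _ (clA_sub_one_mem_orth α.A z)
  -- a sequence of elements with smaller and smaller rotation part
  have hrun := fun jj => gap_run hR₀ hcov hα hsmall hc₀pos hc₀le hc₀ hu1 huU jj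
  choose ξ hξΓ hξm hξr hξd using hrun
  set P : ℝ := ‖α.a‖ + R₀ + 1 with hPdef
  have hP0 : 0 < P := by
    have := norm_nonneg α.a
    rw [hPdef]; linarith
  set P₃ : ℝ := 4 * P / c₀ with hP₃def
  have hξm' : ∀ jj, ‖(ξ jj).a‖ ≤ P₃ := by
    intro jj
    rw [hP₃def, le_div_iff₀ hc₀pos]
    have := hξm jj
    linarith [this]
  -- pigeonhole: one element occurs for infinitely many jj
  have hfin := finite_bounded hΓ P₃
  haveI := hfin.to_subtype
  set φf : ℕ → {g : Iso n | g ∈ Γ ∧ ‖g.a‖ ≤ P₃} :=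
    fun jj => ⟨ξ jj, hξΓ jj, hξm' jj⟩ with hφfdef
  obtain ⟨y, hy⟩ := Finite.exists_infinite_fiber φf
  have hfib : (φf ⁻¹' {y} : Set ℕ).Infinite := (Set.infinite_coe_iff (s := φf ⁻¹' {y})).mp hy
  set ξ' : Iso n := (y : Iso n) with hξ'def
  have hξ'mem : ξ' ∈ Γ := y.2.1
  have hξeq : ∀ jj ∈ φf ⁻¹' {y}, ξ jj = ξ' := by
    intro jj hjj
    have : φf jj = y := hjj
    rw [hφfdef] at this
    exact congrArg Subtype.val this
  -- the rotation part of ξ' is trivial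
  have hrot0 : cl ξ'.A = 1 := by
    have hle : ∀ m : ℕ, ‖cl ξ'.A - 1‖ ≤ 1/(m+1) := by
      intro m
      obtain ⟨jj, hjjmem, hjjgt⟩ := hfib.exists_gt m
      have h1 := hξr jj
      rw [hξeq jj hjjmem] at h1
      refine le_trans h1 ?_
      apply one_div_le_one_div_of_le (by positivity)
      have : (m:ℝ) ≤ (jj:ℝ) := by exact_mod_cast le_of_lt hjjgt
      linarith
    have hn0 : ‖cl ξ'.A - 1‖ ≤ 0 := by
      by_contra hpos
      push_neg at hpos
      obtain ⟨m, hm⟩ := exists_nat_one_div_lt hpos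
      exact absurd (hle m) (not_le.2 hm)
    have := le_antisymm hn0 (norm_nonneg _)
    rw [norm_eq_zero] at this
    linear_combination (norm := abel) this
  have hξ'A : ξ'.A = LinearIsometryEquiv.refl ℝ (E n) :=
    eq_of_cl_eq (by rw [hrot0, cl_refl])
  have hξ'd : c₀/2 * P ≤ ‖(cl α.A - 1) ξ'.a‖ := by
    obtain ⟨jj, hjjmem, -⟩ := hfib.exists_gt 0
    have := hξd jj
    rw [hξeq jj hjjmem] at this
    exact this
  -- the contradiction sequence of translations
  set Df : E n → E n := fun z => (cl α.A - 1) z with hDfdef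
  set w : ℕ → E n := fun j => Df^[j] (Df ξ'.a) with hwdef
  have hw0 : w 0 = Df ξ'.a := rfl
  have hws : ∀ j, w (j+1) = Df (w j) := by
    intro j
    simp only [hwdef, Function.iterate_succ_apply']
  have hwform : ∀ j, ∃ z, w j = (cl α.A - 1) z := by
    intro j
    cases j with
    | zero => exact ⟨ξ'.a, rfl⟩
    | succ j => exact ⟨w j, hws j⟩
  have hwlow : ∀ j, c₀ * ‖w j‖ ≤ ‖w (j+1)‖ := by
    intro j
    obtain ⟨z', hz'⟩ := hwform j
    rw [hws j]
    have : w j ∈ (LinearMap.ker ((cl α.A - 1 : E n →L[ℝ] E n) : E n →ₗ[ℝ] E n))ᗮ := by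
      rw [hz']
      exact clA_sub_one_mem_orth α.A z'
    exact hc₀ _ this
  have hwpos : ∀ j, 0 < ‖w j‖ := by
    intro j
    induction j with
    | zero =>
        rw [hw0]
        calc (0:ℝ) < c₀/2 * P := by positivity
        _ ≤ ‖(cl α.A - 1) ξ'.a‖ := hξ'd
    | succ j ih =>
        calc (0:ℝ) < c₀ * ‖w j‖ := by positivity
        _ ≤ ‖w (j+1)‖ := hwlow j
  have hwdec : ∀ j, ‖w (j+1)‖ < ‖w j‖ := by
    intro j
    rw [hws j]
    calc ‖(cl α.A - 1) (w j)‖ ≤ ‖cl α.A - 1‖ * ‖w j‖ := ContinuousLinearMap.le_opNorm _ _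
    _ < (1/2) * ‖w j‖ := mul_lt_mul_of_pos_right hsmall (hwpos j)
    _ < ‖w j‖ := by linarith [hwpos j]
  have hwanti : StrictAnti (fun j => ‖w j‖) := strictAnti_nat_of_succ_lt hwdec
  have hwinj : Function.Injective w := by
    intro i j hij
    by_contra hne
    rcases lt_or_gt_of_ne hne with h | h
    · exact absurd (congrArg norm hij) (ne_of_gt (hwanti h))
    · exact absurd (congrArg norm hij) (ne_of_lt (hwanti h))
  have hwbdd : ∀ j, ‖w j‖ ≤ ‖w 0‖ := fun j => hwanti.antitone (Nat.zero_le j)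
  have htransw : ∀ j, Iso.trans (w j) ∈ Γ := by
    have htξ : Iso.trans ξ'.a ∈ Γ := by
      have : ξ' = Iso.trans ξ'.a := by
        refine Iso.ext rfl ?_
        rw [hξ'A]; rfl
      rw [← this]
      exact hξ'mem
    intro j
    induction j with
    | zero =>
        rw [hw0]
        have := comm_with_trans α ξ'.a
        rw [← this]
        exact mul_mem (mul_mem (mul_mem hα htξ) (inv_mem hα)) (inv_mem htξ)
    | succ j ih =>
        rw [hws j]
        have := comm_with_trans α (w j)
        rw [show Df (w j) = (cl α.A - 1) (w j) from rfl, ← this]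
        exact mul_mem (mul_mem (mul_mem hα ih) (inv_mem hα)) (inv_mem ih)
  -- contradiction with discreteness
  have hsub : Set.range (fun j => Iso.trans (w j)) ⊆
      {g : Iso n | g ∈ Γ ∧ ‖g.a‖ ≤ ‖w 0‖} := by
    rintro g ⟨j, rfl⟩
    exact ⟨htransw j, by rw [trans_a]; exact hwbdd j⟩
  exact (Set.infinite_range_of_injective (fun i j hij => hwinj (trans_injective hij)))
    ((finite_bounded hΓ ‖w 0‖).subset hsub)

end Aux


namespace Aux
open Iso
open RealInnerProductSpace

variable {n : ℕ}
set_option maxHeartbeats 1000000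

/-- The translation vectors of a crystallographic group span all of space. -/
lemma span_top {Γ : Subgroup (Iso n)} (hΓ : IsCrystallographic Γ) :
    Submodule.span ℝ (transVecs (Γ : Set (Iso n))) = ⊤ := by
  obtain ⟨R₀, hR₀, hcov⟩ := exists_R₀ hΓ
  by_contra hW
  set W := Submodule.span ℝ (transVecs (Γ : Set (Iso n))) with hWdef
  have hperp : Wᗮ ≠ ⊥ := by
    intro h
    apply hW
    have := Submodule.orthogonal_orthogonal W
    rw [h] at this
    rw [← this, Submodule.bot_orthogonal_eq_top]
  obtain ⟨u₀, hu₀W, hu₀ne⟩ := Submodule.exists_mem_ne_zero_of_ne_bot hperp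
  set u : E n := ‖u₀‖⁻¹ • u₀ with hudef
  have hu1 : ‖u‖ = 1 := norm_smul_inv_norm hu₀ne
  have huW : u ∈ Wᗮ := Submodule.smul_mem _ _ hu₀W
  have h14 : (0:ℝ) < 1/4 := by norm_num
  have hT : (0:ℝ) < 8*R₀ := by linarith
  obtain ⟨γ, hγΓ, s, hsT, hγrot, hγtr⟩ := lemmaT hR₀ hcov u hu1 h14 hT
  have hγA : γ.A = LinearIsometryEquiv.refl ℝ (E n) :=
    gap hΓ hR₀ hcov hγΓ (lt_of_le_of_lt hγrot (by norm_num))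
  have hγtrans : γ.a ∈ transVecs (Γ : Set (Iso n)) := by
    have : γ = Iso.trans γ.a := by
      refine Iso.ext rfl ?_
      rw [hγA]; rfl
    show Iso.trans γ.a ∈ Γ
    rw [← this]
    exact hγΓ
  have hγW : γ.a ∈ W := Submodule.subset_span hγtrans
  have hinner0 : ⟪γ.a, u⟫ = 0 := (Submodule.mem_orthogonal W u).1 huW γ.a hγW
  have huu : ⟪u, u⟫ = 1 := by
    rw [real_inner_self_eq_norm_mul_norm, hu1]
    norm_num
  have hsu : ⟪s • u, u⟫ = s := by
    rw [real_inner_smul_left, huu, mul_one]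
  have h1 : ⟪γ.a - s • u, u⟫ = -s := by
    rw [inner_sub_left, hinner0, hsu]
    ring
  have h2 : |⟪γ.a - s • u, u⟫| ≤ 2*R₀ + 1/4*s := by
    calc |⟪γ.a - s • u, u⟫| ≤ ‖γ.a - s • u‖ * ‖u‖ := abs_real_inner_le_norm _ _
    _ = ‖γ.a - s • u‖ := by rw [hu1, mul_one]
    _ ≤ 2*R₀ + 1/4*s := hγtr
  have hs : 8*R₀ ≤ s := hsT
  have hspos : 0 < s := by linarith
  rw [h1, abs_neg, abs_of_pos hspos] at h2
  linarith

/-- coarse density of the translation lattice of a crystallographic group -/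
lemma dense_lattice {Γ : Subgroup (Iso n)} (hΓ : IsCrystallographic Γ) :
    ∃ R₁ : ℝ, 1 ≤ R₁ ∧ ∀ x : E n, ∃ t ∈ tv Γ, ‖x - t‖ ≤ R₁ := by
  obtain ⟨R₁, hR₁, hd⟩ := density (tv Γ)
  refine ⟨R₁, hR₁, fun x => hd x ?_⟩
  have : Submodule.span ℝ ((tv Γ : Set (E n))) = ⊤ := span_top hΓ
  rw [this]
  trivial

/-- rotation parts of `Γ` preserve `spanS N` and its orthogonal complement -/
lemma rot_preserves {Γ N : Subgroup (Iso n)} (hN : IsNormalIn N Γ) {g : Iso n}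
    (hg : g ∈ Γ) :
    (∀ v ∈ spanS (N : Set (Iso n)), g.A v ∈ spanS (N : Set (Iso n))) ∧
    (∀ y ∈ (spanS (N : Set (Iso n)))ᗮ, g.A y ∈ (spanS (N : Set (Iso n)))ᗮ) := by
  have hvec : ∀ g' ∈ Γ, ∀ v ∈ transVecs (N : Set (Iso n)),
      g'.A v ∈ transVecs (N : Set (Iso n)) := by
    intro g' hg' v hv
    have := hN.2 g' hg' (Iso.trans v) hv
    rwa [conj_trans] at this
  have hspan : ∀ g' ∈ Γ, ∀ v ∈ spanS (N : Set (Iso n)), g'.A v ∈ spanS (N : Set (Iso n)) := by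
    intro g' hg' v hv
    have hmap : (spanS (N : Set (Iso n))).map (g'.A.toLinearEquiv : E n →ₗ[ℝ] E n)
        ≤ spanS (N : Set (Iso n)) := by
      rw [spanS, Submodule.map_span]
      apply Submodule.span_le.2
      rintro - ⟨w, hw, rfl⟩
      exact Submodule.subset_span (hvec g' hg' w hw)
    exact hmap ⟨v, hv, rfl⟩
  refine ⟨hspan g hg, ?_⟩
  intro y hy
  rw [Submodule.mem_orthogonal]
  intro w hw
  have h1 : g.A.symm w ∈ spanS (N : Set (Iso n)) := by
    have := hspan g⁻¹ (inv_mem hg) w hw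
    rwa [inv_A] at this
  have h2 : ⟪w, g.A y⟫ = ⟪g.A (g.A.symm w), g.A y⟫ := by
    rw [g.A.apply_symm_apply]
  rw [h2, g.A.inner_map_map]
  exact (Submodule.mem_orthogonal _ _).1 hy _ h1

/-- B1: a normal subgroup is contained in its completion. -/
lemma normal_le_completion {Γ N : Subgroup (Iso n)} (hΓ : IsCrystallographic Γ)
    (hN : IsNormalIn N Γ) :
    ∀ x ∈ N, x ∈ completion Γ (N : Set (Iso n)) := by
  intro x hxN
  have hxΓ : x ∈ Γ := hN.1 hxN
  -- part 1 : rotation fixes the orthogonal complement pointwise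
  have hfix : ∀ y ∈ (spanS (N : Set (Iso n)))ᗮ, x.A y = y := by
    have hcomm : ∀ t ∈ tv Γ, x.A t - t ∈ transVecs (N : Set (Iso n)) := by
      intro t ht
      have h1 : Iso.trans t * x⁻¹ * (Iso.trans t)⁻¹ ∈ N :=
        hN.2 _ (mem_tv.1 ht) x⁻¹ (inv_mem hxN)
      have h2 : x * (Iso.trans t * x⁻¹ * (Iso.trans t)⁻¹) ∈ N := mul_mem hxN h1
      have h3 : x * (Iso.trans t * x⁻¹ * (Iso.trans t)⁻¹) = Iso.trans (x.A t - t) := by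
        have : x * (Iso.trans t * x⁻¹ * (Iso.trans t)⁻¹)
            = (x * Iso.trans t * x⁻¹) * (Iso.trans t)⁻¹ := by
          group
        rw [this, conj_trans, trans_inv, trans_mul_trans, sub_eq_add_neg]
      rwa [h3] at h2
    have hall : ∀ z : E n, x.A z - z ∈ spanS (N : Set (Iso n)) := by
      have hsub : transVecs (Γ : Set (Iso n)) ⊆
          (Submodule.comap ((cl x.A - 1 : E n →L[ℝ] E n) : E n →ₗ[ℝ] E n)
            (spanS (N : Set (Iso n))) : Set (E n)) := by
        intro t ht
        show (cl x.A - 1) t ∈ spanS (N : Set (Iso n))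
        have h4 : (cl x.A - 1) t = x.A t - t := by
          simp [cl]
        rw [h4]
        exact Submodule.subset_span (hcomm t ht)
      have hle := Submodule.span_le.2 hsub
      rw [span_top hΓ] at hle
      intro z
      have hz : z ∈ (⊤ : Submodule ℝ (E n)) := trivial
      have := hle hz
      have h4 : (cl x.A - 1) z = x.A z - z := by simp [cl]
      rw [← h4]
      exact this
    intro y hy
    have h1 : x.A y - y ∈ spanS (N : Set (Iso n)) := hall y
    have h2 : x.A y ∈ (spanS (N : Set (Iso n)))ᗮ := (rot_preserves hN hxΓ).2 y hy
    have h3 : x.A y - y ∈ (spanS (N : Set (Iso n)))ᗮ := sub_mem h2 hy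
    have h4 : ⟪x.A y - y, x.A y - y⟫ = 0 :=
      (Submodule.mem_orthogonal _ _).1 h3 _ h1
    rw [inner_self_eq_zero, sub_eq_zero] at h4
    exact h4
  -- part 2 : translation part lies in the span
  have hbV : x.a ∈ spanS (N : Set (Iso n)) := by
    have hpow : ∀ y ∈ (spanS (N : Set (Iso n)))ᗮ, ∀ k : ℕ,
        ⟪(x^k).a, y⟫ = k * ⟪x.a, y⟫ := by
      intro y hy k
      induction k with
      | zero => simp [pow_zero]
      | succ k ih =>
          rw [pow_a, inner_add_left]
          have h1 : ⟪x.A ((x^k).a), y⟫ = ⟪(x^k).a, y⟫ := by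
            conv_lhs => rw [show y = x.A y from (hfix y hy).symm]
            rw [x.A.inner_map_map]
          rw [h1, ih]
          push_cast
          ring
    obtain ⟨R₁, hR₁, hdense⟩ := dense_lattice hΓ
    have hsel : ∀ k : ℕ, ∃ t ∈ tv Γ, ‖(Iso.trans t * x^k).a‖ ≤ R₁ := by
      intro k
      obtain ⟨t, ht, hb⟩ := hdense (-(x^k).a)
      refine ⟨t, ht, ?_⟩
      have h1 : (Iso.trans t * x^k).a = t + (x^k).a := by
        simp [Iso.trans]
      rw [h1]
      have h2 : t + (x^k).a = -((-(x^k).a) - t) := by abel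
      rw [h2, norm_neg]
      exact hb
    choose tk htk hbound using hsel
    have hfinite := finite_bounded hΓ R₁
    haveI := hfinite.to_subtype
    have hmemF : ∀ k : ℕ, Iso.trans (tk k) * x^k ∈ {g : Iso n | g ∈ Γ ∧ ‖g.a‖ ≤ R₁} := by
      intro k
      refine ⟨mul_mem (mem_tv.1 (htk k)) (pow_mem hxΓ k), hbound k⟩
    obtain ⟨k, k', hkk', heq⟩ := Finite.exists_ne_map_eq_of_infinite
      (fun k : ℕ => (⟨Iso.trans (tk k) * x^k, hmemF k⟩ :
        {g : Iso n | g ∈ Γ ∧ ‖g.a‖ ≤ R₁}))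
    have heq' : Iso.trans (tk k) * x^k = Iso.trans (tk k') * x^k' :=
      congrArg Subtype.val heq
    have key : ∀ (a b : ℕ), a < b → Iso.trans (tk a) * x^a = Iso.trans (tk b) * x^b →
        x.a ∈ spanS (N : Set (Iso n)) := by
      intro a b hab heqab
      have h5 : x ^ (b - a) * x ^ a = x ^ b := by
        rw [← pow_add]
        congr 1
        omega
      have h7 : x ^ b = (Iso.trans (tk b))⁻¹ * Iso.trans (tk a) * x^a := by
        rw [mul_assoc, heqab]
        group
      rw [h7] at h5
      have h8 : x ^ (b - a) = (Iso.trans (tk b))⁻¹ * Iso.trans (tk a) :=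
        mul_right_cancel h5
      rw [trans_inv, trans_mul_trans] at h8
      -- so x^(b-a) is the translation by tk a - tk b
      have hτN : Iso.trans (-tk b + tk a) ∈ N := by
        rw [← h8]
        exact pow_mem hxN _
      have hτV : (-tk b + tk a) ∈ spanS (N : Set (Iso n)) :=
        Submodule.subset_span hτN
      have hinner : ∀ y ∈ (spanS (N : Set (Iso n)))ᗮ, ⟪x.a, y⟫ = 0 := by
        intro y hy
        have h9 := hpow y hy (b - a)
        have h10 : (x ^ (b - a)).a = -tk b + tk a := by
          rw [h8]
          rfl
        rw [h10] at h9
        have h11 : ⟪-tk b + tk a, y⟫ = 0 :=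
          (Submodule.mem_orthogonal _ _).1 hy _ hτV
        rw [h11] at h9
        have hba : (1:ℝ) ≤ ((b - a : ℕ) : ℝ) := by
          have : 1 ≤ b - a := by omega
          exact_mod_cast this
        have := h9.symm
        rcases mul_eq_zero.1 this with h | h
        · linarith
        · exact h
      have hmem : x.a ∈ ((spanS (N : Set (Iso n)))ᗮ)ᗮ := by
        rw [Submodule.mem_orthogonal]
        intro u hu
        rw [real_inner_comm]
        exact hinner u hu
      rwa [Submodule.orthogonal_orthogonal] at hmem
    rcases lt_or_gt_of_ne hkk' with hlt | hlt
    · exact key k k' hlt heq'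
    · exact key k' k hlt heq'.symm
  exact ⟨hxΓ, hbV, hfix⟩

end Aux


namespace Aux
open Iso
open RealInnerProductSpace

variable {n : ℕ}
set_option maxHeartbeats 1000000

/-- The completion, as a subgroup. -/
def cpl (Γ N : Subgroup (Iso n)) (hN : IsNormalIn N Γ) : Subgroup (Iso n) where
  carrier := completion Γ (N : Set (Iso n))
  one_mem' := by
    refine ⟨one_mem Γ, ?_, ?_⟩
    · show (0 : E n) ∈ _
      exact Submodule.zero_mem _
    · intro y hy
      rfl
  mul_mem' := by
    rintro g h ⟨hgΓ, hga, hgA⟩ ⟨hhΓ, hha, hhA⟩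
    refine ⟨mul_mem hgΓ hhΓ, ?_, ?_⟩
    · show g.a + g.A h.a ∈ _
      exact Submodule.add_mem _ hga ((rot_preserves hN hgΓ).1 h.a hha)
    · intro y hy
      show g.A (h.A y) = y
      rw [hhA y hy, hgA y hy]
  inv_mem' := by
    rintro g ⟨hgΓ, hga, hgA⟩
    refine ⟨inv_mem hgΓ, ?_, ?_⟩
    · show -(g.A.symm g.a) ∈ _
      apply Submodule.neg_mem
      have := (rot_preserves hN (inv_mem hgΓ)).1 g.a hga
      rwa [inv_A] at this
    · intro y hy
      show g.A.symm y = y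
      have := hgA y hy
      conv_lhs => rw [← this]
      exact g.A.symm_apply_apply y

lemma cpl_coe (Γ N : Subgroup (Iso n)) (hN : IsNormalIn N Γ) :
    (cpl Γ N hN : Set (Iso n)) = completion Γ (N : Set (Iso n)) := rfl

lemma cpl_le (Γ N : Subgroup (Iso n)) (hN : IsNormalIn N Γ) : cpl Γ N hN ≤ Γ :=
  fun _ hg => hg.1

/-- (A) : the completion is normal in Γ. -/
lemma cpl_normal (Γ N : Subgroup (Iso n)) (hN : IsNormalIn N Γ) :
    IsNormalIn (cpl Γ N hN) Γ := by
  refine ⟨cpl_le Γ N hN, ?_⟩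
  rintro g hg x ⟨hxΓ, hxa, hxA⟩
  refine ⟨mul_mem (mul_mem hg hxΓ) (inv_mem hg), ?_, ?_⟩
  · -- translation part
    have hform : (g * x * g⁻¹).a
        = g.A x.a + (g.a - g.A (x.A (g.A.symm g.a))) := by
      simp only [mul_a, mul_A, inv_a, inv_A, LinearIsometryEquiv.trans_apply, map_neg]
      abel
    show (g * x * g⁻¹).a ∈ _
    rw [hform]
    refine Submodule.add_mem _ ((rot_preserves hN hg).1 x.a hxa) ?_
    have hperp : ∀ y ∈ (spanS (N : Set (Iso n)))ᗮ,
        ⟪g.a - g.A (x.A (g.A.symm g.a)), y⟫ = 0 := by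
      intro y hy
      have hy' : g.A.symm y ∈ (spanS (N : Set (Iso n)))ᗮ := by
        have := (rot_preserves hN (inv_mem hg)).2 y hy
        rwa [inv_A] at this
      have h2 : ⟪g.A (x.A (g.A.symm g.a)), y⟫ = ⟪x.A (g.A.symm g.a), g.A.symm y⟫ := by
        conv_lhs => rw [show y = g.A (g.A.symm y) from (g.A.apply_symm_apply y).symm]
        rw [g.A.inner_map_map]
      have h3 : ⟪x.A (g.A.symm g.a), g.A.symm y⟫ = ⟪g.A.symm g.a, g.A.symm y⟫ := by
        conv_lhs => rw [show g.A.symm y = x.A (g.A.symm y) from (hxA _ hy').symm]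
        rw [x.A.inner_map_map]
      have h4 : ⟪g.A.symm g.a, g.A.symm y⟫ = ⟪g.a, y⟫ := g.A.symm.inner_map_map _ _
      rw [inner_sub_left, h2, h3, h4]
      ring
    have hmem : g.a - g.A (x.A (g.A.symm g.a)) ∈ ((spanS (N : Set (Iso n)))ᗮ)ᗮ := by
      rw [Submodule.mem_orthogonal]
      intro u hu
      rw [real_inner_comm]
      exact hperp u hu
    rwa [Submodule.orthogonal_orthogonal] at hmem
  · -- rotation part
    intro y hy
    show g.A (x.A (g.A.symm y)) = y
    have hy' : g.A.symm y ∈ (spanS (N : Set (Iso n)))ᗮ := by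
      have := (rot_preserves hN (inv_mem hg)).2 y hy
      rwa [inv_A] at this
    rw [hxA _ hy', g.A.apply_symm_apply]

/-- covering relation: `K` is covered by finitely many left translates of `H`. -/
def Cover (H K : Subgroup (Iso n)) : Prop :=
  ∃ S : Set (Iso n), S.Finite ∧ S ⊆ (K : Set (Iso n)) ∧
    ∀ x ∈ K, ∃ s ∈ S, s⁻¹ * x ∈ H

lemma cover_of_le {H K : Subgroup (Iso n)} (h : K ≤ H) : Cover H K := by
  refine ⟨{1}, Set.finite_singleton 1, by simp [one_mem], fun x hx => ⟨1, rfl, ?_⟩⟩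
  rw [inv_one, one_mul]
  exact h hx

/-- (B2) : the completion is covered by finitely many translates of N. -/
lemma cover_cpl {Γ N : Subgroup (Iso n)} (hΓ : IsCrystallographic Γ)
    (hN : IsNormalIn N Γ) : Cover N (cpl Γ N hN) := by
  obtain ⟨R₁, hR₁, hdense⟩ := density (tv N)
  refine ⟨{g : Iso n | g ∈ cpl Γ N hN ∧ ‖g.a‖ ≤ R₁}, ?_, fun g hg => hg.1, ?_⟩
  · exact (finite_bounded hΓ R₁).subset
      (fun g hg => ⟨cpl_le Γ N hN hg.1, hg.2⟩)
  · intro x hx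
    obtain ⟨t, htN, htb⟩ := hdense x.a (by exact hx.2.1)
    have httrans : Iso.trans t ∈ N := htN
    have hnegt : Iso.trans (-t) ∈ N := mem_tv.1 ((tv N).neg_mem htN)
    have htV : Iso.trans (-t) ∈ cpl Γ N hN := by
      refine ⟨hN.1 hnegt, ?_, ?_⟩
      · show -t ∈ spanS (N : Set (Iso n))
        exact Submodule.neg_mem _ (Submodule.subset_span htN)
      · intro y hy
        rfl
    refine ⟨Iso.trans (-t) * x, ⟨mul_mem htV hx, ?_⟩, ?_⟩
    · show ‖(Iso.trans (-t) * x).a‖ ≤ R₁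
      have h1 : (Iso.trans (-t) * x).a = -t + x.a := by
        simp [Iso.trans]
      rw [h1]
      have h2 : -t + x.a = x.a - t := by abel
      rw [h2]
      exact htb
    · have h1 : (Iso.trans (-t) * x)⁻¹ * x = x⁻¹ * Iso.trans t * (x⁻¹)⁻¹ := by
        rw [mul_inv_rev, trans_inv, neg_neg, inv_inv]
      rw [h1]
      exact hN.2 x⁻¹ (inv_mem hx.1) _ httrans

lemma trans_pow (a : E n) (k : ℕ) : (Iso.trans a)^k = Iso.trans (k • a) := by
  induction k with
  | zero => simp
  | succ k ih =>
      rw [pow_succ, ih, trans_mul_trans, succ_nsmul]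

/-- a covered subgroup has smaller span -/
lemma span_le_of_cover {H K : Subgroup (Iso n)} (hc : Cover H K) :
    spanS (K : Set (Iso n)) ≤ spanS (H : Set (Iso n)) := by
  obtain ⟨S, hSfin, hSK, hScov⟩ := hc
  apply Submodule.span_le.2
  intro a ha
  have haK : Iso.trans a ∈ K := ha
  have hsel : ∀ k : ℕ, ∃ s ∈ S, s⁻¹ * (Iso.trans a)^k ∈ H :=
    fun k => hScov _ (pow_mem haK k)
  choose sk hskS hskH using hsel
  haveI := hSfin.to_subtype
  obtain ⟨k, k', hkk', heq⟩ := Finite.exists_ne_map_eq_of_infinite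
    (fun k : ℕ => (⟨sk k, hskS k⟩ : S))
  have heq' : sk k = sk k' := congrArg Subtype.val heq
  have key : ∀ (c d : ℕ), c < d → sk c = sk d → a ∈ spanS (H : Set (Iso n)) := by
    intro c d hcd hsame
    have h1 : ((sk c)⁻¹ * (Iso.trans a)^c)⁻¹ * ((sk d)⁻¹ * (Iso.trans a)^d) ∈ H :=
      mul_mem (inv_mem (hskH c)) (hskH d)
    have h2 : ((sk c)⁻¹ * (Iso.trans a)^c)⁻¹ * ((sk d)⁻¹ * (Iso.trans a)^d)
        = ((Iso.trans a)^c)⁻¹ * (Iso.trans a)^d := by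
      rw [hsame]
      group
    rw [h2, trans_pow, trans_pow, trans_inv, trans_mul_trans] at h1
    have hdc : c ≤ d := le_of_lt hcd
    have h3 : -(c • a) + d • a = ((d - c : ℕ) : ℝ) • a := by
      rw [← Nat.cast_smul_eq_nsmul ℝ c a, ← Nat.cast_smul_eq_nsmul ℝ d a,
        Nat.cast_sub hdc, sub_smul]
      abel
    rw [h3] at h1
    have h4 : (((d - c : ℕ) : ℝ)) • a ∈ spanS (H : Set (Iso n)) :=
      Submodule.subset_span h1
    have h5 : ((d - c : ℕ) : ℝ) ≠ 0 := by
      have h6 : 1 ≤ d - c := by omega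
      have h7 : (1:ℝ) ≤ ((d - c : ℕ) : ℝ) := by exact_mod_cast h6
      linarith
    have h6 := Submodule.smul_mem (spanS (H : Set (Iso n))) (((d - c : ℕ) : ℝ))⁻¹ h4
    rwa [smul_smul, inv_mul_cancel₀ h5, one_smul] at h6
  rcases lt_or_gt_of_ne hkk' with hlt | hlt
  · exact key k k' hlt heq'
  · exact key k' k hlt heq'.symm

end Aux


namespace Aux
open Iso

variable {n : ℕ}
set_option maxHeartbeats 1000000

lemma completion_eq_of_span_eq {Γ M N : Subgroup (Iso n)}
    (h : spanS (M : Set (Iso n)) = spanS (N : Set (Iso n))) :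
    completion Γ (M : Set (Iso n)) = completion Γ (N : Set (Iso n)) := by
  unfold completion
  rw [h]

/-- (C) : any normal subgroup commensurable with N lies in the completion of N. -/
lemma maximal {Γ N M : Subgroup (Iso n)} (hΓ : IsCrystallographic Γ)
    (hN : IsNormalIn N Γ) (hM : IsNormalIn M Γ)
    (h1 : Cover N M) (h2 : Cover M N) :
    ∀ x ∈ M, x ∈ completion Γ (N : Set (Iso n)) := by
  intro x hx
  have hspan : spanS (M : Set (Iso n)) = spanS (N : Set (Iso n)) :=
    le_antisymm (span_le_of_cover h1) (span_le_of_cover h2)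
  have hh := normal_le_completion hΓ hM x hx
  rwa [completion_eq_of_span_eq (Γ := Γ) hspan] at hh

section Transport

variable {Γ Γ' : Subgroup (Iso n)} (ψ : ↥Γ ≃* ↥Γ')

/-- transport of a subgroup of `Iso n` contained in `Γ` along `ψ`. -/
def tr (H : Subgroup (Iso n)) : Subgroup (Iso n) :=
  ((H.subgroupOf Γ).map ψ.toMonoidHom).map Γ'.subtype

lemma mem_tr {H : Subgroup (Iso n)} {x' : Iso n} :
    x' ∈ tr ψ H ↔ ∃ x : ↥Γ, (x : Iso n) ∈ H ∧ ((ψ x : ↥Γ') : Iso n) = x' := by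
  constructor
  · rintro ⟨y, hy, rfl⟩
    obtain ⟨z, hz, rfl⟩ := hy
    exact ⟨z, hz, rfl⟩
  · rintro ⟨x, hx, rfl⟩
    exact ⟨ψ x, ⟨x, hx, rfl⟩, rfl⟩

lemma tr_le_base (H : Subgroup (Iso n)) : tr ψ H ≤ Γ' := by
  intro x' hx'
  rw [mem_tr] at hx'
  obtain ⟨x, -, rfl⟩ := hx'
  exact (ψ x).2

lemma tr_mono {H K : Subgroup (Iso n)} (h : H ≤ K) : tr ψ H ≤ tr ψ K := by
  intro x' hx'
  rw [mem_tr] at hx' ⊢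
  obtain ⟨x, hx, rfl⟩ := hx'
  exact ⟨x, h hx, rfl⟩

lemma tr_coe (H : Subgroup (Iso n)) :
    (tr ψ H : Set (Iso n)) = Subtype.val '' (⇑ψ '' {x : ↥Γ | (x : Iso n) ∈ H}) := by
  ext x'
  rw [SetLike.mem_coe, mem_tr]
  constructor
  · rintro ⟨x, hx, rfl⟩
    exact ⟨ψ x, ⟨x, hx, rfl⟩, rfl⟩
  · rintro ⟨y, ⟨x, hx, rfl⟩, rfl⟩
    exact ⟨x, hx, rfl⟩

lemma tr_normal {H : Subgroup (Iso n)} (hH : IsNormalIn H Γ) :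
    IsNormalIn (tr ψ H) Γ' := by
  refine ⟨tr_le_base ψ H, ?_⟩
  intro g' hg' x' hx'
  rw [mem_tr] at hx'
  obtain ⟨x, hx, rfl⟩ := hx'
  set q : ↥Γ := ψ.symm ⟨g', hg'⟩ with hqdef
  have hkey : g' * ((ψ x : ↥Γ') : Iso n) * g'⁻¹ = ((ψ (q * x * q⁻¹) : ↥Γ') : Iso n) := by
    rw [map_mul, map_mul, map_inv]
    rw [hqdef, MulEquiv.apply_symm_apply]
    rfl
  rw [hkey, mem_tr]
  refine ⟨q * x * q⁻¹, ?_, rfl⟩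
  have : ((q * x * q⁻¹ : ↥Γ) : Iso n) = (q : Iso n) * (x : Iso n) * (q : Iso n)⁻¹ := rfl
  rw [this]
  exact hH.2 _ q.2 _ hx

lemma tr_cover {H K : Subgroup (Iso n)} (hK : K ≤ Γ) (hc : Cover H K) :
    Cover (tr ψ H) (tr ψ K) := by
  obtain ⟨S, hSfin, hSK, hScov⟩ := hc
  refine ⟨Subtype.val '' (⇑ψ '' ((↑) ⁻¹' S : Set ↥Γ)), ?_, ?_, ?_⟩
  · apply Set.Finite.image
    apply Set.Finite.image
    exact hSfin.preimage (Set.injOn_of_injective Subtype.val_injective)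
  · rintro - ⟨y, ⟨x, hx, rfl⟩, rfl⟩
    rw [SetLike.mem_coe, mem_tr]
    exact ⟨x, hSK hx, rfl⟩
  · intro x' hx'
    rw [mem_tr] at hx'
    obtain ⟨x, hx, rfl⟩ := hx'
    obtain ⟨s, hsS, hsH⟩ := hScov _ hx
    set st : ↥Γ := ⟨s, hK (hSK hsS)⟩ with hstdef
    refine ⟨((ψ st : ↥Γ') : Iso n), ⟨ψ st, ⟨st, hsS, rfl⟩, rfl⟩, ?_⟩
    have hkey : ((ψ st : ↥Γ') : Iso n)⁻¹ * ((ψ x : ↥Γ') : Iso n)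
        = ((ψ (st⁻¹ * x) : ↥Γ') : Iso n) := by
      rw [map_mul, map_inv]
      rfl
    rw [hkey, mem_tr]
    exact ⟨st⁻¹ * x, hsH, rfl⟩

lemma tr_tr_symm {H : Subgroup (Iso n)} (hH : H ≤ Γ) :
    tr ψ.symm (tr ψ H) = H := by
  ext x
  rw [mem_tr]
  constructor
  · rintro ⟨y, hy, rfl⟩
    rw [mem_tr] at hy
    obtain ⟨z, hz, hzy⟩ := hy
    have : ψ z = y := Subtype.val_injective hzy
    rw [← this, MulEquiv.symm_apply_apply]
    exact hz
  · intro hx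
    refine ⟨ψ ⟨x, hH hx⟩, ?_, ?_⟩
    · rw [mem_tr]
      exact ⟨⟨x, hH hx⟩, hx, rfl⟩
    · rw [MulEquiv.symm_apply_apply]

end Transport

/-- Main theorem. -/
theorem main {Γ Γ' N : Subgroup (Iso n)} (hΓ : IsCrystallographic Γ)
    (hΓ' : IsCrystallographic Γ') (hN : IsNormalIn N Γ) (ψ : ↥Γ ≃* ↥Γ') :
    completion Γ' (Subtype.val '' (⇑ψ '' {x : ↥Γ | (x : Iso n) ∈ N})) =
      Subtype.val '' (⇑ψ '' {x : ↥Γ | (x : Iso n) ∈ completion Γ (N : Set (Iso n))}) := by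
  set X := cpl Γ N hN with hXdef
  have hXnorm : IsNormalIn X Γ := cpl_normal Γ N hN
  have hNleX : N ≤ X := fun x hx => normal_le_completion hΓ hN x hx
  have hcovX : Cover N X := cover_cpl hΓ hN
  have hN'norm : IsNormalIn (tr ψ N) Γ' := tr_normal ψ hN
  set X' := cpl Γ' (tr ψ N) hN'norm with hX'def
  have hX'norm : IsNormalIn X' Γ' := cpl_normal Γ' (tr ψ N) hN'norm
  -- first inclusion
  have htrXnorm : IsNormalIn (tr ψ X) Γ' := tr_normal ψ hXnorm
  have hcov1 : Cover (tr ψ N) (tr ψ X) := tr_cover ψ (cpl_le Γ N hN) hcovX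
  have hcov2 : Cover (tr ψ X) (tr ψ N) := cover_of_le (tr_mono ψ hNleX)
  have hclaim1 : tr ψ X ≤ X' := fun x hx =>
    maximal hΓ' hN'norm htrXnorm hcov1 hcov2 x hx
  -- second inclusion
  have hZnorm : IsNormalIn (tr ψ.symm X') Γ := tr_normal ψ.symm hX'norm
  have hcov3 : Cover N (tr ψ.symm X') := by
    have h := tr_cover ψ.symm (cpl_le Γ' (tr ψ N) hN'norm) (cover_cpl hΓ' hN'norm)
    rwa [tr_tr_symm ψ hN.1] at h
  have hNleZ : N ≤ tr ψ.symm X' := by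
    have h1 : tr ψ N ≤ X' := fun x hx =>
      normal_le_completion hΓ' hN'norm x hx
    have h2 := tr_mono ψ.symm h1
    rwa [tr_tr_symm ψ hN.1] at h2
  have hcov4 : Cover (tr ψ.symm X') N := cover_of_le hNleZ
  have hclaim2 : tr ψ.symm X' ≤ X := fun x hx =>
    maximal hΓ hN hZnorm hcov3 hcov4 x hx
  have hclaim2' : X' ≤ tr ψ X := by
    have h1 := tr_mono ψ hclaim2
    have h2 : tr ψ (tr ψ.symm X') = X' := by
      have := tr_tr_symm ψ.symm (Γ := Γ') (Γ' := Γ) (cpl_le Γ' (tr ψ N) hN'norm)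
      rwa [MulEquiv.symm_symm] at this
    rwa [h2] at h1
  have hfinal : tr ψ X = X' := le_antisymm hclaim1 hclaim2'
  -- set-level conclusion
  have hset1 : Subtype.val '' (⇑ψ '' {x : ↥Γ | (x : Iso n) ∈ N})
      = ((tr ψ N : Subgroup (Iso n)) : Set (Iso n)) := (tr_coe ψ N).symm
  have hset2 : Subtype.val '' (⇑ψ '' {x : ↥Γ | (x : Iso n) ∈ completion Γ (N : Set (Iso n))})
      = ((tr ψ X : Subgroup (Iso n)) : Set (Iso n)) := (tr_coe ψ X).symm
  rw [hset1, hset2, hfinal]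
  rfl

end Aux

/-- If `ψ : Γ → Γ'` is an isomorphism of crystallographic groups and
`N` is a normal subgroup of `Γ`, then the completion of `ψ(N)` in `Γ'` equals `ψ(N̄)`. -/
theorem stmt5 {n : ℕ} (Γ Γ' N : Subgroup (Iso n)) (hΓ : Iso.IsCrystallographic Γ)
    (hΓ' : Iso.IsCrystallographic Γ') (hN : Iso.IsNormalIn N Γ) (ψ : ↥Γ ≃* ↥Γ') :
    Iso.completion Γ' (Subtype.val '' (⇑ψ '' {x : ↥Γ | (x : Iso n) ∈ N})) =
      Subtype.val '' (⇑ψ '' {x : ↥Γ | (x : Iso n) ∈ Iso.completion Γ (N : Set (Iso n))}) :=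
  Aux.main hΓ hΓ' hN ψ
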